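/- arXiv:2412.13345 — 4 statements merged into one kernel-verified Lean document; each statement's English description precedes it below -/
import Mathlib

section
/- Let G=(V,E) be a connected undirected graph on [n], let P be an all-pairs set of paths for G with vertex congestion at most g, and let L≥2 be an integer. Let x∈{1}×[n]^L be good and let v∈[n]. Then Σ_{j=1}^{L} n^j·|T_j| ≤ g·n^L + L²·g·n^{L−1}. -/
open Finset

/-- An all-pairs set of simple paths in `G`, with `P^{u,u}` the trivial path. -/
structure PathSystem {n : ℕ} (G : SimpleGraph (Fin n)) where
  path : ∀ u v : Fin n, G.Walk u v
  isPath : ∀ u v : Fin n, (path u v).IsPath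
  diag : ∀ u : Fin n, path u u = SimpleGraph.Walk.nil

/-- Vertex congestion of a path system: max over vertices of total occurrences. -/
def PathSystem.congestion {n : ℕ} {G : SimpleGraph (Fin n)} (P : PathSystem G) : ℕ :=
  Finset.univ.sup fun w : Fin n =>
    ∑ u : Fin n, ∑ v : Fin n, (P.path u v).support.count w

/-- Support of the `i`-th quasi-segment `P^{x_i, x_{i+1}}` (0-based). -/
def segSupport {n L : ℕ} {G : SimpleGraph (Fin n)} (P : PathSystem G)
    (x : Fin (L + 1) → Fin n) (i : ℕ) : List (Fin n) :=
  (P.path (x ⟨min i L, by omega⟩) (x ⟨min (i + 1) L, by omega⟩)).support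

/-- Support of the staircase walk `P^{x_j,x_{j+1}} ∘ ⋯ ∘ P^{x_{L-1},x_L}` (0-based `j`). -/
def stairSupportFrom {n L : ℕ} {G : SimpleGraph (Fin n)} (P : PathSystem G)
    (x : Fin (L + 1) → Fin n) (j : ℕ) : List (Fin n) :=
  x ⟨min j L, by omega⟩ ::
    (List.ofFn fun k : Fin (L - j) =>
      (P.path (x ⟨j + k, by have := k.isLt; omega⟩)
              (x ⟨j + k + 1, by have := k.isLt; omega⟩)).support.tail).flatten

/-- `Tail(j, S_x)` (0-based `j`): the staircase from `x_j` with the first occurrence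
of `x_j` removed. -/
def tailSupport {n L : ℕ} {G : SimpleGraph (Fin n)} (P : PathSystem G)
    (x : Fin (L + 1) → Fin n) (j : ℕ) : List (Fin n) :=
  (stairSupportFrom P x j).erase (x ⟨min j L, by omega⟩)

/-- Largest 0-based index `i` such that the prefixes `x_0 … x_i` and `y_0 … y_i` agree
(`J_{x,y} - 1` in 1-based notation). -/
def J0 {n L : ℕ} (x y : Fin (L + 1) → Fin n) : ℕ :=
  (Finset.univ.filter fun i : Fin (L + 1) => ∀ k ≤ i, x k = y k).sup fun i => (i : ℕ)

/-- `q_v(u)`: the number of paths in `P` starting at `u` that contain `v`. -/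
def qcount {n : ℕ} {G : SimpleGraph (Fin n)} (P : PathSystem G) (v u : Fin n) : ℕ :=
  (Finset.univ.filter fun w : Fin n => v ∈ (P.path u w).support).card

/-- Largest 0-based index `i` with `v ∈ P^{x_i,x_{i+1}}`. -/
def maxSegIdx {n L : ℕ} {G : SimpleGraph (Fin n)} (P : PathSystem G)
    (x : Fin (L + 1) → Fin n) (v : Fin n) : ℕ :=
  ((Finset.range L).filter fun i => v ∈ segSupport P x i).sup id

/-- The function `f_x`. -/
noncomputable def fS {n L : ℕ} {G : SimpleGraph (Fin n)} (P : PathSystem G)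
    (x : Fin (L + 1) → Fin n) (v : Fin n) : ℤ :=
  if v ∈ stairSupportFrom P x 0 then
    -(((maxSegIdx P x v : ℤ) + 1) * n) - (((segSupport P x (maxSegIdx P x v)).idxOf v : ℤ) + 1)
  else (G.dist v (x 0) : ℤ)

/-- The function `g_{x,b}`. -/
noncomputable def gS {n L : ℕ} {G : SimpleGraph (Fin n)} (P : PathSystem G)
    (x : Fin (L + 1) → Fin n) (b : ℤ) (v : Fin n) : ℤ × ℤ :=
  if v = x (Fin.last L) then (fS P x v, b) else (fS P x v, -1)

/-- The relation `r*`. -/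
noncomputable def rstar {n L : ℕ} (x y : Fin (L + 1) → Fin n) (b1 b2 : ℤ) : ℝ :=
  if b1 = b2 ∨ ¬ Function.Injective x ∨ ¬ Function.Injective y then 0
  else (n : ℝ) ^ (J0 x y + 1)

/-- The relation `r`. -/
noncomputable def rrel {n L : ℕ} (x y : Fin (L + 1) → Fin n) (b1 b2 : ℤ) : ℝ :=
  if x = y then 0 else rstar x y b1 b2

/-- The relation `r'`. -/
noncomputable def rprime {n L : ℕ} {G : SimpleGraph (Fin n)} (P : PathSystem G) (g : ℕ)
    (x y : Fin (L + 1) → Fin n) (b1 b2 : ℤ) (v : Fin n) : ℝ :=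
  if gS P x b1 v = gS P y b2 v ∨ b1 = b2 then 0
  else if v ∈ tailSupport P x (J0 x y) ∧ v ∉ tailSupport P y (J0 x y) then
    rrel x y b1 b2 * g / (n : ℝ) ^ (1.5 : ℝ)
  else if v ∈ tailSupport P y (J0 x y) ∧ v ∉ tailSupport P x (J0 x y) then
    rrel x y b1 b2 * (n : ℝ) ^ (1.5 : ℝ) / g
  else rrel x y b1 b2

/-- The vertex congestion of the graph `G`. -/
noncomputable def vertexCongestion {n : ℕ} (G : SimpleGraph (Fin n)) : ℕ :=
  sInf {c | ∃ P : PathSystem G, P.congestion = c}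

/-- The number of cut edges `|E(S, V∖S)|`. -/
def cutEdges {n : ℕ} (G : SimpleGraph (Fin n)) [DecidableRel G.Adj]
    (S : Finset (Fin n)) : ℕ :=
  ((S ×ˢ Sᶜ).filter fun p => G.Adj p.1 p.2).card



section AuxStmt0

variable {n L : ℕ} {G : SimpleGraph (Fin n)}

lemma qcount_sum_le (P : PathSystem G) (v : Fin n) :
    ∑ u : Fin n, qcount P v u ≤ P.congestion := by
  have h : ∀ u : Fin n, qcount P v u = ∑ w : Fin n, (P.path u w).support.count v := by
    intro u
    rw [qcount, Finset.card_filter]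
    refine Finset.sum_congr rfl fun w _ => ?_
    by_cases hv : v ∈ (P.path u w).support
    · rw [if_pos hv, List.count_eq_one_of_mem (P.isPath u w).support_nodup hv]
    · rw [if_neg hv, List.count_eq_zero_of_not_mem hv]
  calc ∑ u, qcount P v u = ∑ u, ∑ w, (P.path u w).support.count v := by simp [h]
    _ ≤ P.congestion := by
        rw [PathSystem.congestion]
        exact Finset.le_sup (f := fun w : Fin n => ∑ u : Fin n, ∑ v' : Fin n,
          (P.path u v').support.count w) (Finset.mem_univ v)

lemma J0_prefix {x y : Fin (L + 1) → Fin n} (h0 : x 0 = y 0) :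
    ∀ i : Fin (L + 1), (i : ℕ) ≤ J0 x y → x i = y i := by
  classical
  have h0s : (0 : Fin (L + 1)) ∈
      Finset.univ.filter fun i : Fin (L + 1) => ∀ k ≤ i, x k = y k := by
    simp only [Finset.mem_filter, Finset.mem_univ, true_and]
    intro k hk
    have : k = 0 := le_antisymm hk (Fin.zero_le k)
    rw [this]; exact h0
  obtain ⟨i, his, hsup⟩ := Finset.exists_mem_eq_sup _ ⟨0, h0s⟩
    (fun i : Fin (L + 1) => (i : ℕ))
  intro i' hi'
  rw [J0, hsup] at hi'
  exact (Finset.mem_filter.mp his).2 i' hi'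

lemma tail_mem {P : PathSystem G} {y : Fin (L + 1) → Fin n} {v : Fin n} {j : ℕ}
    (hv : v ∈ tailSupport P y j) :
    ∃ k : Fin L, j ≤ (k : ℕ) ∧
      v ∈ (P.path (y k.castSucc) (y k.succ)).support := by
  unfold tailSupport stairSupportFrom at hv
  rw [List.erase_cons_head, List.mem_flatten] at hv
  obtain ⟨l, hl, hvl⟩ := hv
  rw [List.mem_ofFn] at hl
  obtain ⟨kk, hkk⟩ := hl
  have hkL := kk.isLt
  refine ⟨⟨j + kk, by omega⟩, by simp, ?_⟩
  rw [← hkk] at hvl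
  have : v ∈ (P.path (y ⟨j + kk, by omega⟩) (y ⟨j + kk + 1, by omega⟩)).support :=
    List.mem_of_mem_tail hvl
  convert this using 3 <;> rfl

lemma card_diag (P : PathSystem G) (x : Fin (L + 1) → Fin n) (v : Fin n)
    {j : ℕ} (hj : j < L) :
    (Finset.univ.filter fun y : Fin (L + 1) → Fin n =>
        (∀ i : Fin (L + 1), (i : ℕ) ≤ j → y i = x i) ∧
          v ∈ (P.path (y ⟨j, by omega⟩) (y ⟨j + 1, by omega⟩)).support).card
      ≤ qcount P v (x ⟨j, by omega⟩) * n ^ (L - 1 - j) := by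
  classical
  have hmain : (Finset.univ.filter fun y : Fin (L + 1) → Fin n =>
        (∀ i : Fin (L + 1), (i : ℕ) ≤ j → y i = x i) ∧
          v ∈ (P.path (y ⟨j, by omega⟩) (y ⟨j + 1, by omega⟩)).support).card
      ≤ ((Finset.univ.filter fun w =>
          v ∈ (P.path (x ⟨j, by omega⟩) w).support) ×ˢ
        (Finset.univ : Finset (Fin (L - 1 - j) → Fin n))).card := by
    refine Finset.card_le_card_of_injOn (fun y =>
      (y ⟨j + 1, by omega⟩,
        fun m : Fin (L - 1 - j) => y ⟨j + 2 + m, by have := m.isLt; omega⟩)) ?_ ?_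
    · intro y hy
      rw [Finset.mem_coe, Finset.mem_filter] at hy
      rw [Finset.mem_coe, Finset.mem_product, Finset.mem_filter]
      refine ⟨⟨Finset.mem_univ _, ?_⟩, Finset.mem_univ _⟩
      have hx : y ⟨j, by omega⟩ = x ⟨j, by omega⟩ := hy.2.1 ⟨j, by omega⟩ le_rfl
      rw [← hx]
      exact hy.2.2
    · intro y1 hy1 y2 hy2 heq
      rw [Finset.mem_coe, Finset.mem_filter] at hy1 hy2
      simp only [Prod.mk.injEq] at heq
      funext i
      have hiL := i.isLt
      rcases Nat.lt_or_ge (i : ℕ) (j + 1) with hi | hi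
      · rw [hy1.2.1 i (by omega), hy2.2.1 i (by omega)]
      · rcases Nat.eq_or_lt_of_le hi with hi2 | hi2
        · have e1 : i = ⟨j + 1, by omega⟩ := Fin.ext (show (i : ℕ) = j + 1 by omega)
          rw [e1]; exact heq.1
        · have h3 := congrFun heq.2 ⟨(i : ℕ) - (j + 2), by omega⟩
          have e1 : i = ⟨j + 2 + ((i : ℕ) - (j + 2)), by omega⟩ :=
            Fin.ext (show (i : ℕ) = j + 2 + ((i : ℕ) - (j + 2)) by omega)
          rw [e1]; exact h3
  refine hmain.trans_eq ?_
  rw [Finset.card_product, Finset.card_univ, Fintype.card_fun, Fintype.card_fin,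
    Fintype.card_fin, qcount]

lemma card_offdiag (P : PathSystem G) (x : Fin (L + 1) → Fin n) (v : Fin n)
    {j k : ℕ} (hjk : j < k) (hk : k < L) :
    (Finset.univ.filter fun y : Fin (L + 1) → Fin n =>
        (∀ i : Fin (L + 1), (i : ℕ) ≤ j → y i = x i) ∧
          v ∈ (P.path (y ⟨k, by omega⟩) (y ⟨k + 1, by omega⟩)).support).card
      ≤ (∑ u : Fin n, qcount P v u) * n ^ (L - 2 - j) := by
  classical
  have hmain : (Finset.univ.filter fun y : Fin (L + 1) → Fin n =>
        (∀ i : Fin (L + 1), (i : ℕ) ≤ j → y i = x i) ∧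
          v ∈ (P.path (y ⟨k, by omega⟩) (y ⟨k + 1, by omega⟩)).support).card
      ≤ ((Finset.univ.filter fun p : Fin n × Fin n =>
          v ∈ (P.path p.1 p.2).support) ×ˢ
        ((Finset.univ : Finset (Fin (k - 1 - j) → Fin n)) ×ˢ
         (Finset.univ : Finset (Fin (L - 1 - k) → Fin n)))).card := by
    refine Finset.card_le_card_of_injOn (fun y =>
      ((y ⟨k, by omega⟩, y ⟨k + 1, by omega⟩),
        (fun m : Fin (k - 1 - j) => y ⟨j + 1 + m, by have := m.isLt; omega⟩,
         fun m : Fin (L - 1 - k) => y ⟨k + 2 + m, by have := m.isLt; omega⟩))) ?_ ?_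
    · intro y hy
      rw [Finset.mem_coe, Finset.mem_filter] at hy
      rw [Finset.mem_coe, Finset.mem_product, Finset.mem_filter]
      exact ⟨⟨Finset.mem_univ _, hy.2.2⟩,
        Finset.mem_product.mpr ⟨Finset.mem_univ _, Finset.mem_univ _⟩⟩
    · intro y1 hy1 y2 hy2 heq
      rw [Finset.mem_coe, Finset.mem_filter] at hy1 hy2
      simp only [Prod.mk.injEq] at heq
      obtain ⟨⟨h1, h1'⟩, h2, h3⟩ := heq
      funext i
      have hiL := i.isLt
      rcases Nat.lt_or_ge (i : ℕ) (j + 1) with hi | hi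
      · rw [hy1.2.1 i (by omega), hy2.2.1 i (by omega)]
      · rcases Nat.lt_or_ge (i : ℕ) k with hi2 | hi2
        · have h4 := congrFun h2 ⟨(i : ℕ) - (j + 1), by omega⟩
          have e1 : i = ⟨j + 1 + ((i : ℕ) - (j + 1)), by omega⟩ :=
            Fin.ext (show (i : ℕ) = j + 1 + ((i : ℕ) - (j + 1)) by omega)
          rw [e1]; exact h4
        · rcases Nat.lt_or_ge (i : ℕ) (k + 2) with hi3 | hi3
          · rcases Nat.eq_or_lt_of_le hi2 with hi4 | hi4
            · have e1 : i = ⟨k, by omega⟩ := Fin.ext (show (i : ℕ) = k by omega)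
              rw [e1]; exact h1
            · have e1 : i = ⟨k + 1, by omega⟩ := Fin.ext (show (i : ℕ) = k + 1 by omega)
              rw [e1]; exact h1'
          · have h4 := congrFun h3 ⟨(i : ℕ) - (k + 2), by omega⟩
            have e1 : i = ⟨k + 2 + ((i : ℕ) - (k + 2)), by omega⟩ :=
              Fin.ext (show (i : ℕ) = k + 2 + ((i : ℕ) - (k + 2)) by omega)
            rw [e1]; exact h4
  refine hmain.trans ?_
  rw [Finset.card_product, Finset.card_product, Finset.card_univ, Finset.card_univ,
    Fintype.card_fun, Fintype.card_fun, Fintype.card_fin, Fintype.card_fin]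
  have hpairs : (Finset.univ.filter fun p : Fin n × Fin n =>
      v ∈ (P.path p.1 p.2).support).card = ∑ u : Fin n, qcount P v u := by
    rw [Finset.card_filter, Fintype.sum_prod_type]
    refine Finset.sum_congr rfl fun u _ => ?_
    simp only [qcount, Finset.card_filter]
  have he : k - 1 - j + (L - 1 - k) = L - 2 - j := by clear hpairs hmain; omega
  rw [hpairs, Fintype.card_fin, ← pow_add, he]

end AuxStmt0

theorem stmt0 {n L g : ℕ} (hn : 2 ≤ n) (hL : 2 ≤ L)
    (G : SimpleGraph (Fin n)) (hG : G.Connected)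
    (P : PathSystem G) (hg : P.congestion ≤ g)
    (x : Fin (L + 1) → Fin n) (hx1 : x 0 = ⟨0, by omega⟩)
    (hxgood : Function.Injective x) (v : Fin n) :
    ∑ j ∈ Finset.range L,
        n ^ (j + 1) *
          (Finset.univ.filter fun y : Fin (L + 1) → Fin n =>
              y 0 = (⟨0, by omega⟩ : Fin n) ∧ J0 x y = j ∧ v ∈ tailSupport P y j).card
      ≤ g * n ^ L + L ^ 2 * g * n ^ (L - 1) := by
  classical
  have hgq : (∑ u : Fin n, qcount P v u) ≤ g := (qcount_sum_le P v).trans hg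
  rw [← Fin.sum_univ_eq_sum_range]
  have hstep : ∀ kj : Fin L,
      n ^ ((kj : ℕ) + 1) * (Finset.univ.filter fun y : Fin (L + 1) → Fin n =>
          y 0 = (⟨0, by omega⟩ : Fin n) ∧ J0 x y = (kj : ℕ) ∧
            v ∈ tailSupport P y (kj : ℕ)).card
        ≤ qcount P v (x kj.castSucc) * n ^ L + L * g * n ^ (L - 1) := by
    intro kj
    have hjL : (kj : ℕ) < L := kj.isLt
    have hsub : (Finset.univ.filter fun y : Fin (L + 1) → Fin n =>
          y 0 = (⟨0, by omega⟩ : Fin n) ∧ J0 x y = (kj : ℕ) ∧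
            v ∈ tailSupport P y (kj : ℕ))
        ⊆ (Finset.univ.filter fun k : Fin L => (kj : ℕ) ≤ (k : ℕ)).biUnion
            (fun k => Finset.univ.filter fun y : Fin (L + 1) → Fin n =>
              (∀ i : Fin (L + 1), (i : ℕ) ≤ (kj : ℕ) → y i = x i) ∧
                v ∈ (P.path (y k.castSucc) (y k.succ)).support) := by
      intro y hy
      rw [Finset.mem_filter] at hy
      obtain ⟨-, hy0, hJ, hvt⟩ := hy
      have h0 : x 0 = y 0 := by rw [hx1, hy0]
      obtain ⟨k, hk1, hk2⟩ := tail_mem hvt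
      exact Finset.mem_biUnion.mpr ⟨k, Finset.mem_filter.mpr ⟨Finset.mem_univ _, hk1⟩,
        Finset.mem_filter.mpr ⟨Finset.mem_univ _,
          fun i hi => (J0_prefix h0 i (le_of_le_of_eq hi hJ.symm)).symm, hk2⟩⟩
    have hcard : (Finset.univ.filter fun y : Fin (L + 1) → Fin n =>
          y 0 = (⟨0, by omega⟩ : Fin n) ∧ J0 x y = (kj : ℕ) ∧
            v ∈ tailSupport P y (kj : ℕ)).card
        ≤ qcount P v (x kj.castSucc) * n ^ (L - 1 - (kj : ℕ))
          + (Finset.univ.filter fun k : Fin L => (kj : ℕ) < (k : ℕ)).card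
              * (g * n ^ (L - 2 - (kj : ℕ))) := by
      refine (Finset.card_le_card hsub).trans (Finset.card_biUnion_le.trans ?_)
      have hKeq : (Finset.univ.filter fun k : Fin L => (kj : ℕ) ≤ (k : ℕ))
          = insert kj (Finset.univ.filter fun k : Fin L => (kj : ℕ) < (k : ℕ)) := by
        ext k
        simp only [Finset.mem_filter, Finset.mem_univ, true_and, Finset.mem_insert,
          Fin.ext_iff]
        omega
      have hnotmem : kj ∉ Finset.univ.filter fun k : Fin L => (kj : ℕ) < (k : ℕ) := by
        simp only [Finset.mem_filter, Finset.mem_univ, true_and]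
        omega
      rw [hKeq, Finset.sum_insert hnotmem]
      refine Nat.add_le_add ?_ ?_
      · exact card_diag P x v hjL
      · refine le_trans (Finset.sum_le_card_nsmul _ _ (g * n ^ (L - 2 - (kj : ℕ))) ?_)
          (by rw [smul_eq_mul])
        intro k hk
        have hjk : (kj : ℕ) < (k : ℕ) := (Finset.mem_filter.mp hk).2
        refine (card_offdiag P x v hjk k.isLt).trans ?_
        exact Nat.mul_le_mul_right _ hgq
    have hKcard : (Finset.univ.filter fun k : Fin L => (kj : ℕ) < (k : ℕ)).card ≤ L :=
      (Finset.card_filter_le _ _).trans (by rw [Finset.card_univ, Fintype.card_fin])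
    have hmul : n ^ ((kj : ℕ) + 1) * (qcount P v (x kj.castSucc) * n ^ (L - 1 - (kj : ℕ))
        + (Finset.univ.filter fun k : Fin L => (kj : ℕ) < (k : ℕ)).card
            * (g * n ^ (L - 2 - (kj : ℕ))))
        ≤ qcount P v (x kj.castSucc) * n ^ L + L * g * n ^ (L - 1) := by
      rw [Nat.mul_add]
      refine Nat.add_le_add ?_ ?_
      · have h1 : n ^ ((kj : ℕ) + 1) * (qcount P v (x kj.castSucc) * n ^ (L - 1 - (kj : ℕ)))
            = qcount P v (x kj.castSucc) * (n ^ ((kj : ℕ) + 1) * n ^ (L - 1 - (kj : ℕ))) := by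
          ring
        have he : (kj : ℕ) + 1 + (L - 1 - (kj : ℕ)) = L := by clear * - hjL; omega
        rw [h1, ← pow_add, he]
      · rcases Nat.lt_or_ge ((kj : ℕ) + 1) L with hcase | hcase
        · have h1 : n ^ ((kj : ℕ) + 1)
              * ((Finset.univ.filter fun k : Fin L => (kj : ℕ) < (k : ℕ)).card
                  * (g * n ^ (L - 2 - (kj : ℕ))))
              = (Finset.univ.filter fun k : Fin L => (kj : ℕ) < (k : ℕ)).card * g
                  * (n ^ ((kj : ℕ) + 1) * n ^ (L - 2 - (kj : ℕ))) := by
            ring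
          have he : (kj : ℕ) + 1 + (L - 2 - (kj : ℕ)) = L - 1 := by clear * - hcase; omega
          rw [h1, ← pow_add, he]
          exact Nat.mul_le_mul_right _ (Nat.mul_le_mul_right _ hKcard)
        · have hC0 : (Finset.univ.filter fun k : Fin L => (kj : ℕ) < (k : ℕ)) = ∅ := by
            ext k
            simp only [Finset.mem_filter, Finset.mem_univ, true_and,
              Finset.notMem_empty, iff_false, not_lt]
            have hkL := k.isLt
            clear * - hkL hcase; omega
          rw [hC0]
          simp
    exact le_trans (Nat.mul_le_mul_left _ hcard) hmul
  refine le_trans (Finset.sum_le_sum fun kj _ => hstep kj) ?_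
  have hsum : ∑ kj : Fin L, (qcount P v (x kj.castSucc) * n ^ L + L * g * n ^ (L - 1))
      = (∑ kj : Fin L, qcount P v (x kj.castSucc)) * n ^ L + L * (L * g * n ^ (L - 1)) := by
    rw [Finset.sum_add_distrib, ← Finset.sum_mul, Finset.sum_const, Finset.card_univ,
      Fintype.card_fin, smul_eq_mul]
  rw [hsum]
  have h1 : (∑ kj : Fin L, qcount P v (x kj.castSucc)) ≤ g := by
    have hinj : ∀ a ∈ (Finset.univ : Finset (Fin L)), ∀ b ∈ (Finset.univ : Finset (Fin L)),
        x a.castSucc = x b.castSucc → a = b :=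
      fun a _ b _ h => Fin.castSucc_injective L (hxgood h)
    calc ∑ kj : Fin L, qcount P v (x kj.castSucc)
        = ∑ u ∈ (Finset.univ : Finset (Fin L)).image (fun kj => x kj.castSucc),
            qcount P v u := (Finset.sum_image hinj).symm
      _ ≤ ∑ u : Fin n, qcount P v u :=
          Finset.sum_le_sum_of_subset (Finset.subset_univ _)
      _ ≤ g := hgq
  have h2 : L * (L * g * n ^ (L - 1)) = L ^ 2 * g * n ^ (L - 1) := by ring
  rw [h2]
  exact Nat.add_le_add_right (Nat.mul_le_mul_right _ h1) _
end

section
/- Let G=(V,E) be a connected undirected graph on [n], let P be an all-pairs set of paths for G with vertex congestion at most g, and let L≥2 be an integer with L≤√n and n≥4. Let x∈{1}×[n]^L be good, let v∈[n], and let j∈[L]. Then |T_j| ≤ q_v(x_j)·n^{L−j} + L·g·n^{L−j−1}. -/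
open Finset

lemma mem_tail_iff {n L : ℕ} {G : SimpleGraph (Fin n)} (P : PathSystem G)
    (y : Fin (L + 1) → Fin n) (v : Fin n) (m : ℕ) (hm : m ≤ L) :
    v ∈ tailSupport P y m ↔ ∃ k : Fin (L - m),
      v ∈ ((P.path (y ⟨m + k, by have := k.isLt; omega⟩)
        (y ⟨m + k + 1, by have := k.isLt; omega⟩)).support).tail := by
  unfold tailSupport stairSupportFrom
  rw [List.erase_cons_head]
  simp [List.mem_flatten, List.mem_ofFn]

lemma J0_agree {n L : ℕ} (x y : Fin (L + 1) → Fin n) (h0 : x 0 = y 0) (m : ℕ)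
    (hJ : J0 x y = m) (k : Fin (L + 1)) (hk : (k : ℕ) ≤ m) : x k = y k := by
  classical
  have hne : (Finset.univ.filter fun i : Fin (L + 1) => ∀ k ≤ i, x k = y k).Nonempty := by
    refine ⟨0, ?_⟩
    simp only [Finset.mem_filter, Finset.mem_univ, true_and]
    intro k hk
    have hk0 : k = 0 := le_antisymm hk (Fin.zero_le k)
    rw [hk0]; exact h0
  obtain ⟨i, hi, hsup⟩ := Finset.exists_mem_eq_sup _ hne (fun i : Fin (L + 1) => (i : ℕ))
  rw [Finset.mem_filter] at hi
  unfold J0 at hJ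
  have him : (i : ℕ) = m := by omega
  exact hi.2 k (by rw [Fin.le_def]; omega)

lemma pairCard_le {n : ℕ} {G : SimpleGraph (Fin n)} (P : PathSystem G) {g : ℕ}
    (hg : P.congestion ≤ g) (v : Fin n) :
    (Finset.univ.filter fun p : Fin n × Fin n => v ∈ (P.path p.1 p.2).support).card ≤ g := by
  classical
  have h1 : (Finset.univ.filter fun p : Fin n × Fin n => v ∈ (P.path p.1 p.2).support).card
      ≤ ∑ p : Fin n × Fin n, (P.path p.1 p.2).support.count v := by
    rw [Finset.card_eq_sum_ones]
    refine le_trans (Finset.sum_le_sum fun p hp => ?_)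
      (Finset.sum_le_sum_of_subset (Finset.filter_subset _ _))
    rw [Finset.mem_filter] at hp
    exact List.count_pos_iff.mpr hp.2
  have h2 : ∑ p : Fin n × Fin n, (P.path p.1 p.2).support.count v
      = ∑ u : Fin n, ∑ w : Fin n, (P.path u w).support.count v := by
    rw [Fintype.sum_prod_type]
  have h3 : (∑ u : Fin n, ∑ w : Fin n, (P.path u w).support.count v) ≤ P.congestion := by
    unfold PathSystem.congestion
    exact Finset.le_sup (f := fun w : Fin n => ∑ u : Fin n, ∑ v2 : Fin n,
      (P.path u v2).support.count w) (Finset.mem_univ v)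
  omega
theorem stmt1 {n L g : ℕ} (hn : 4 ≤ n) (hL2 : 2 ≤ L) (hLn : (L : ℝ) ≤ Real.sqrt n)
    (G : SimpleGraph (Fin n)) (hG : G.Connected)
    (P : PathSystem G) (hg : P.congestion ≤ g)
    (x : Fin (L + 1) → Fin n) (hx1 : x 0 = ⟨0, by omega⟩)
    (hxgood : Function.Injective x) (v : Fin n)
    (j : ℕ) (hj1 : 1 ≤ j) (hjL : j ≤ L) :
    ((Finset.univ.filter fun y : Fin (L + 1) → Fin n =>
        y 0 = (⟨0, by omega⟩ : Fin n) ∧ J0 x y = j - 1 ∧ v ∈ tailSupport P y (j - 1)).card : ℝ)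
      ≤ (qcount P v (x ⟨j - 1, by omega⟩) : ℝ) * (n : ℝ) ^ ((L : ℤ) - j)
        + (L : ℝ) * (g : ℝ) * (n : ℝ) ^ ((L : ℤ) - j - 1) := by
  have hm : j - 1 ≤ L := by omega
  have pm : j - 1 < L + 1 := Nat.lt_succ_of_le hm
  have pj : j < L + 1 := Nat.lt_succ_of_le hjL
  set A1 : Finset (Fin (L + 1) → Fin n) := Finset.univ.filter (fun y =>
      (∀ k : Fin (L + 1), (k : ℕ) ≤ j - 1 → y k = x k) ∧
      v ∈ (P.path (x ⟨j - 1, pm⟩) (y ⟨j, pj⟩)).support) with hA1def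
  set B : ℕ → Finset (Fin (L + 1) → Fin n) := fun k => Finset.univ.filter (fun y =>
      (∀ i : Fin (L + 1), (i : ℕ) ≤ j - 1 → y i = x i) ∧
      v ∈ (P.path (y ⟨min k L, Nat.lt_succ_of_le (Nat.min_le_right _ _)⟩) (y ⟨min (k + 1) L, Nat.lt_succ_of_le (Nat.min_le_right _ _)⟩)).support) with hBdef
  set q := qcount P v (x ⟨j - 1, pm⟩) with hqdef
  clear_value A1 B q
  -- the subset step
  have hsub : (Finset.univ.filter fun y : Fin (L + 1) → Fin n =>
        y 0 = (⟨0, by omega⟩ : Fin n) ∧ J0 x y = j - 1 ∧ v ∈ tailSupport P y (j - 1))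
      ⊆ A1 ∪ (Finset.Ico j L).biUnion B := by
    intro y hy
    rw [Finset.mem_filter] at hy
    obtain ⟨-, hy0, hyJ, hyT⟩ := hy
    have hagree : ∀ k : Fin (L + 1), (k : ℕ) ≤ j - 1 → y k = x k := fun k hk =>
      (J0_agree x y (by rw [hx1, hy0]) (j - 1) hyJ k hk).symm
    rw [mem_tail_iff P y v (j - 1) hm] at hyT
    obtain ⟨k, hk⟩ := hyT
    have hkL : (k : ℕ) < L - (j - 1) := k.isLt
    rcases Nat.eq_zero_or_pos (k : ℕ) with hk0 | hkpos
    · refine Finset.mem_union_left _ ?_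
      rw [hA1def, Finset.mem_filter]
      refine ⟨Finset.mem_univ _, hagree, ?_⟩
      have h' := List.mem_of_mem_tail hk
      have e1 : (⟨j - 1 + (k : ℕ), by omega⟩ : Fin (L + 1)) = ⟨j - 1, pm⟩ :=
        Fin.ext (by simp [hk0])
      have e2 : (⟨j - 1 + (k : ℕ) + 1, by omega⟩ : Fin (L + 1)) = ⟨j, pj⟩ :=
        Fin.ext (by simp [hk0]; omega)
      rw [e1, e2, hagree ⟨j - 1, pm⟩ (Nat.le_refl _)] at h'
      exact h'
    · refine Finset.mem_union_right _ ?_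
      rw [Finset.mem_biUnion]
      refine ⟨j - 1 + (k : ℕ), Finset.mem_Ico.mpr ⟨by omega, by omega⟩, ?_⟩
      rw [hBdef]
      simp only [Finset.mem_filter]
      refine ⟨Finset.mem_univ _, hagree, ?_⟩
      have h' := List.mem_of_mem_tail hk
      have e1 : (⟨j - 1 + (k : ℕ), by omega⟩ : Fin (L + 1))
          = ⟨min (j - 1 + (k : ℕ)) L, Nat.lt_succ_of_le (Nat.min_le_right _ _)⟩ :=
        Fin.ext (by simp only [Fin.val_mk]; omega)
      have e2 : (⟨j - 1 + (k : ℕ) + 1, by omega⟩ : Fin (L + 1))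
          = ⟨min (j - 1 + (k : ℕ) + 1) L, Nat.lt_succ_of_le (Nat.min_le_right _ _)⟩ :=
        Fin.ext (by simp only [Fin.val_mk]; omega)
      rw [e1, e2] at h'
      exact h'
  -- counting A1
  have hA1card : A1.card ≤ q * n ^ (L - j) := by
    have hle := Finset.card_le_card_of_injOn (s := A1)
      (f := fun y : Fin (L + 1) → Fin n =>
        (y ⟨j, pj⟩,
         fun i : Fin (L - j) => y ⟨j + 1 + (i : ℕ), by have := i.isLt; omega⟩))
      (t := (Finset.univ.filter fun w => v ∈ (P.path (x ⟨j - 1, pm⟩) w).support)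
              ×ˢ (Finset.univ : Finset (Fin (L - j) → Fin n)))
      (fun y hy => by
        rw [hA1def, Finset.mem_coe, Finset.mem_filter] at hy
        exact Finset.mem_coe.mpr (Finset.mem_product.mpr ⟨Finset.mem_filter.mpr ⟨Finset.mem_univ _, hy.2.2⟩,
          Finset.mem_univ _⟩))
      (by
        intro y1 h1 y2 h2 heq
        simp only [Finset.mem_coe, hA1def, Finset.mem_filter] at h1 h2
        have hfst := congrArg Prod.fst heq
        have hsnd := congrArg Prod.snd heq
        simp only at hfst hsnd
        funext i
        rcases lt_trichotomy (i : ℕ) j with h | h | h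
        · rw [h1.2.1 i (by omega), h2.2.1 i (by omega)]
        · have e : i = ⟨j, pj⟩ := Fin.ext h
          rw [e]; exact hfst
        · have hlt : (i : ℕ) - j - 1 < L - j := by have := i.isLt; omega
          have h' := congrFun hsnd ⟨(i : ℕ) - j - 1, hlt⟩
          simp only at h'
          have e : (⟨j + 1 + ((i : ℕ) - j - 1), by omega⟩ : Fin (L + 1)) = i :=
            Fin.ext (by simp; omega)
          rwa [e] at h')
    refine le_trans hle ?_
    rw [Finset.card_product, Finset.card_univ]
    have : Fintype.card (Fin (L - j) → Fin n) = n ^ (L - j) := by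
      simp
    rw [this, hqdef]
    rfl
  -- counting B k
  have hBcard : ∀ k ∈ Finset.Ico j L, (B k).card ≤ g * n ^ (L - j - 1) := by
    intro k hkI
    rw [Finset.mem_Ico] at hkI
    have hle := Finset.card_le_card_of_injOn (s := B k)
      (f := fun y : Fin (L + 1) → Fin n =>
        ((y ⟨min k L, Nat.lt_succ_of_le (Nat.min_le_right _ _)⟩, y ⟨min (k + 1) L, Nat.lt_succ_of_le (Nat.min_le_right _ _)⟩),
         fun i : Fin (L - j - 1) =>
           y ⟨if j + (i : ℕ) < k then j + (i : ℕ) else j + (i : ℕ) + 2,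
              by have := i.isLt; split <;> omega⟩))
      (t := (Finset.univ.filter fun p : Fin n × Fin n => v ∈ (P.path p.1 p.2).support)
              ×ˢ (Finset.univ : Finset (Fin (L - j - 1) → Fin n)))
      (fun y hy => by
        rw [hBdef] at hy
        simp only [Finset.mem_coe, Finset.mem_filter] at hy
        exact Finset.mem_coe.mpr (Finset.mem_product.mpr ⟨Finset.mem_filter.mpr ⟨Finset.mem_univ _, hy.2.2⟩,
          Finset.mem_univ _⟩))
      (by
        intro y1 h1 y2 h2 heq
        simp only [Finset.mem_coe, hBdef, Finset.mem_filter] at h1 h2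
        have h11 := congrArg (fun p => p.1.1) heq
        have h12 := congrArg (fun p => p.1.2) heq
        have hsnd := congrArg Prod.snd heq
        simp only at h11 h12 hsnd
        funext i
        by_cases hc1 : (i : ℕ) < j
        · rw [h1.2.1 i (by omega), h2.2.1 i (by omega)]
        · by_cases hc2 : (i : ℕ) = k
          · have e : i = ⟨min k L, Nat.lt_succ_of_le (Nat.min_le_right _ _)⟩ := Fin.ext (by simp only [Fin.val_mk]; omega)
            rw [e]; exact h11
          · by_cases hc3 : (i : ℕ) = k + 1
            · have e : i = ⟨min (k + 1) L, Nat.lt_succ_of_le (Nat.min_le_right _ _)⟩ := Fin.ext (by simp only [Fin.val_mk]; omega)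
              rw [e]; exact h12
            · by_cases hc4 : (i : ℕ) < k
              · have hlt : (i : ℕ) - j < L - j - 1 := by omega
                have h' := congrFun hsnd ⟨(i : ℕ) - j, hlt⟩
                simp only at h'
                have e : (⟨if j + ((i : ℕ) - j) < k then j + ((i : ℕ) - j)
                    else j + ((i : ℕ) - j) + 2, by split <;> omega⟩ : Fin (L + 1)) = i := by
                  apply Fin.ext
                  show (if j + ((i : ℕ) - j) < k then j + ((i : ℕ) - j)
                    else j + ((i : ℕ) - j) + 2) = (i : ℕ)
                  rw [if_pos (by omega)]; omega
                rwa [e] at h'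
              · have hlt : (i : ℕ) - j - 2 < L - j - 1 := by have := i.isLt; omega
                have h' := congrFun hsnd ⟨(i : ℕ) - j - 2, hlt⟩
                simp only at h'
                have e : (⟨if j + ((i : ℕ) - j - 2) < k then j + ((i : ℕ) - j - 2)
                    else j + ((i : ℕ) - j - 2) + 2, by split <;> omega⟩ : Fin (L + 1)) = i := by
                  apply Fin.ext
                  show (if j + ((i : ℕ) - j - 2) < k then j + ((i : ℕ) - j - 2)
                    else j + ((i : ℕ) - j - 2) + 2) = (i : ℕ)
                  rw [if_neg (by omega)]; omega
                rwa [e] at h')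
    refine le_trans hle ?_
    rw [Finset.card_product, Finset.card_univ]
    have hcf : Fintype.card (Fin (L - j - 1) → Fin n) = n ^ (L - j - 1) := by simp
    rw [hcf]
    exact Nat.mul_le_mul_right _ (pairCard_le P hg v)
  -- assemble in ℕ
  have hcard : (Finset.univ.filter fun y : Fin (L + 1) → Fin n =>
        y 0 = (⟨0, by omega⟩ : Fin n) ∧ J0 x y = j - 1 ∧ v ∈ tailSupport P y (j - 1)).card
      ≤ q * n ^ (L - j) + (L - j) * (g * n ^ (L - j - 1)) := by
    calc _ ≤ (A1 ∪ (Finset.Ico j L).biUnion B).card := Finset.card_le_card hsub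
      _ ≤ A1.card + ((Finset.Ico j L).biUnion B).card := Finset.card_union_le _ _
      _ ≤ A1.card + ∑ k ∈ Finset.Ico j L, (B k).card :=
          Nat.add_le_add_left (Finset.card_biUnion_le) _
      _ ≤ q * n ^ (L - j) + (L - j) * (g * n ^ (L - j - 1)) := by
          have hsum := Finset.sum_le_card_nsmul (Finset.Ico j L) _ (g * n ^ (L - j - 1)) hBcard
          rw [Nat.card_Ico, smul_eq_mul] at hsum
          omega
  -- cast to ℝ
  have hcardR := (Nat.cast_le (α := ℝ)).mpr hcard
  clear hcard hsub hA1card hBcard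
  have hR : ((Finset.univ.filter fun y : Fin (L + 1) → Fin n =>
        y 0 = (⟨0, by omega⟩ : Fin n) ∧ J0 x y = j - 1 ∧ v ∈ tailSupport P y (j - 1)).card : ℝ)
      ≤ (q : ℝ) * (n : ℝ) ^ (L - j : ℕ) + ((L - j : ℕ) : ℝ) * ((g : ℝ) * (n : ℝ) ^ (L - j - 1 : ℕ)) := by
    push_cast at hcardR
    convert hcardR using 2 <;> ring
  refine le_trans hR ?_
  have e1 : (n : ℝ) ^ (L - j : ℕ) = (n : ℝ) ^ ((L : ℤ) - j) := by
    rw [show (L : ℤ) - j = ((L - j : ℕ) : ℤ) by omega, zpow_natCast]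
  rw [e1]
  gcongr ?_ + ?_
  · exact le_refl _
  · rcases eq_or_lt_of_le hjL with hjE | hjlt
    · have hz : ((L - j : ℕ) : ℝ) = 0 := by rw [hjE]; simp
      rw [hz, zero_mul]
      have hn' : (0 : ℝ) < (n : ℝ) := by exact_mod_cast (by omega : 0 < n)
      positivity
    · have e2 : (n : ℝ) ^ (L - j - 1 : ℕ) = (n : ℝ) ^ ((L : ℤ) - j - 1) := by
        rw [show (L : ℤ) - j - 1 = ((L - j - 1 : ℕ) : ℤ) by omega, zpow_natCast]
      rw [e2, ← mul_assoc]
      have h1 : ((L - j : ℕ) : ℝ) ≤ (L : ℝ) := by exact_mod_cast Nat.sub_le L j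
      gcongr
end

section
/- Let G be a connected undirected graph on [n] with n≥4, let P be an all-pairs set of paths for G, and let L be an integer with 2≤L≤√n. If x∈{1}×[n]^L is good and b1∈{0,1}, then Σ_{F∈X} r*(g_{x,b1},F) ≥ (1/(2e))·(L+1)·n^{L+1}. -/
open Finset

section AuxStmt3
variable {n L : ℕ}

variable {n L : ℕ}

private lemma J0_le_L (x y : Fin (L + 1) → Fin n) : J0 x y ≤ L :=
  Finset.sup_le fun i _ => Nat.lt_succ_iff.mp i.isLt

private lemma le_J0 (x y : Fin (L + 1) → Fin n) (j : ℕ) (hj : j ≤ L)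
    (h : ∀ i : Fin (L + 1), (i : ℕ) ≤ j → y i = x i) : j ≤ J0 x y := by
  have hmem : (⟨j, by omega⟩ : Fin (L + 1)) ∈
      Finset.univ.filter (fun i : Fin (L + 1) => ∀ k ≤ i, x k = y k) := by
    simp only [Finset.mem_filter, Finset.mem_univ, true_and]
    intro k hk
    exact (h k (by simpa [Fin.le_def] using hk)).symm
  exact Finset.le_sup (f := fun i : Fin (L + 1) => (i : ℕ)) hmem

private lemma of_le_J0 (x y : Fin (L + 1) → Fin n) (h0 : x 0 = y 0) (j : ℕ)
    (hJ : j ≤ J0 x y) : ∀ i : Fin (L + 1), (i : ℕ) ≤ j → y i = x i := by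
  have hne : (Finset.univ.filter (fun i : Fin (L + 1) => ∀ k ≤ i, x k = y k)).Nonempty := by
    refine ⟨0, ?_⟩
    simp only [Finset.mem_filter, Finset.mem_univ, true_and]
    intro k hk
    have hk0 : k = 0 := le_antisymm hk (Fin.zero_le k)
    rw [hk0]; exact h0
  obtain ⟨i0, hi0, hsup⟩ := Finset.exists_mem_eq_sup _ hne (fun i : Fin (L + 1) => (i : ℕ))
  simp only [Finset.mem_filter, Finset.mem_univ, true_and] at hi0
  intro i hi
  have hii : i ≤ i0 := by
    rw [Fin.le_def]
    calc (i : ℕ) ≤ j := hi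
    _ ≤ J0 x y := hJ
    _ = (i0 : ℕ) := by rw [J0, hsup]
  exact (hi0 i hii).symm

private lemma sum_ite_le_pow (x y : Fin (L + 1) → Fin n) :
    ∑ j ∈ Finset.range (L + 1), (if j ≤ J0 x y then ((n : ℝ) - 1) * (n : ℝ) ^ j else 0)
      ≤ (n : ℝ) ^ (J0 x y + 1) := by
  have hJL := J0_le_L x y
  rw [← Finset.sum_filter]
  have hfe : (Finset.range (L + 1)).filter (fun j => j ≤ J0 x y)
      = Finset.range (J0 x y + 1) := by
    ext k; simp only [Finset.mem_filter, Finset.mem_range]; omega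
  rw [hfe]
  have h := geom_sum_mul ((n : ℝ)) (J0 x y + 1)
  have he : ∑ j ∈ Finset.range (J0 x y + 1), ((n : ℝ) - 1) * (n : ℝ) ^ j
      = (∑ j ∈ Finset.range (J0 x y + 1), (n : ℝ) ^ j) * ((n : ℝ) - 1) := by
    rw [Finset.sum_mul]; exact Finset.sum_congr rfl fun _ _ => by ring
  rw [he, h]
  linarith

private lemma pow_sub_le_descFactorial (N : ℕ) : ∀ (m c : ℕ), c + 1 + m ≤ N →
    (N : ℝ) ^ (m + 1) - (N : ℝ) ^ m * (∑ t ∈ Finset.Ico (c + 1) (c + 1 + m), (t : ℝ))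
      ≤ (N : ℝ) * ((N - (c + 1)).descFactorial m : ℝ)
  | 0, c, h => by simp
  | (m + 1), c, h => by
    have h2 : (c + 1) + 1 + m ≤ N := by omega
    have ih := pow_sub_le_descFactorial N m (c + 1) h2
    rw [show c + 1 + 1 = c + 2 from by omega] at ih
    have hsplit : (N - (c + 1)).descFactorial (m + 1)
        = (N - (c + 1)) * (N - (c + 2)).descFactorial m := by
      have hrw : N - (c + 1) = (N - (c + 2)) + 1 := by omega
      rw [hrw, Nat.succ_descFactorial_succ]
    have hsum : ∑ t ∈ Finset.Ico (c + 1) (c + 1 + (m + 1)), (t : ℝ)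
        = (c + 1 : ℝ) + ∑ t ∈ Finset.Ico (c + 2) (c + 2 + m), (t : ℝ) := by
      rw [show c + 1 + (m + 1) = c + 2 + m by omega,
        Finset.sum_eq_sum_Ico_succ_bot (by omega)]
      push_cast; ring_nf
    have hcast : ((N - (c + 1) : ℕ) : ℝ) = (N : ℝ) - (c + 1) := by
      have : c + 1 ≤ N := by omega
      push_cast [this]; ring
    rw [hsplit, hsum]
    push_cast [hcast]
    set s := ∑ t ∈ Finset.Ico (c + 2) (c + 2 + m), (t : ℝ) with hs
    have hsnn : 0 ≤ s := Finset.sum_nonneg fun t _ => by positivity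
    have hcN : (c + 1 : ℝ) ≤ N := by exact_mod_cast by omega
    have hfac : (0 : ℝ) ≤ (N : ℝ) - (c + 1) := by linarith
    have hmul := mul_le_mul_of_nonneg_left ih hfac
    have hNm : (0 : ℝ) ≤ (N : ℝ) ^ m := by positivity
    have hprod : (0:ℝ) ≤ ((c:ℝ) + 1) * (N:ℝ) ^ m * s :=
      mul_nonneg (mul_nonneg (by positivity) hNm) hsnn
    have hexp : ((N:ℝ)) ^ (m + 1 + 1) - (N:ℝ) ^ (m + 1) * ((c:ℝ) + 1 + s)
        = ((N:ℝ) - ((c:ℝ) + 1)) * ((N:ℝ) ^ (m + 1) - (N:ℝ) ^ m * s)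
          - ((c:ℝ) + 1) * (N:ℝ) ^ m * s := by ring
    have hre : (N:ℝ) * (((N:ℝ) - ((c:ℝ) + 1)) * ((N - (c + 2)).descFactorial m : ℝ))
        = ((N:ℝ) - ((c:ℝ) + 1)) * ((N:ℝ) * ((N - (c + 2)).descFactorial m : ℝ)) := by ring
    rw [hexp, hre]
    linarith



private lemma card_prefix_ge (x : Fin (L + 1) → Fin n) (hx : Function.Injective x)
    (j : ℕ) (hj : j ≤ L)
    (t : Finset (Fin (L + 1) → Fin n))
    (ht : ∀ y : Fin (L + 1) → Fin n, Function.Injective y →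
      (∀ i : Fin (L + 1), (i : ℕ) ≤ j → y i = x i) → y ∈ t) :
    (n - (j + 1)).descFactorial (L - j) ≤ t.card := by
  classical
  set A : Finset (Fin n) := (Finset.Iic (⟨j, by omega⟩ : Fin (L + 1))).image x with hA
  have hAcard : A.card = j + 1 := by
    rw [hA, Finset.card_image_of_injective _ hx, Fin.card_Iic]
  have hτ : Fintype.card {v : Fin n // v ∉ A} = n - (j + 1) := by
    rw [Fintype.card_subtype_compl]
    simp [hAcard]
  -- the injection
  set Φ : (Fin (L - j) ↪ {v : Fin n // v ∉ A}) → (Fin (L + 1) → Fin n) :=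
    fun e i => if h : (i : ℕ) ≤ j then x i
      else (e ⟨(i : ℕ) - (j + 1), by have := i.isLt; omega⟩).1 with hΦ
  have hxA : ∀ i : Fin (L + 1), (i : ℕ) ≤ j → x i ∈ A := by
    intro i hi
    exact Finset.mem_image_of_mem x (by simpa [Finset.mem_Iic, Fin.le_def] using hi)
  have hmem : ∀ e, Φ e ∈ t := by
    intro e
    apply ht
    · -- injectivity of Φ e
      intro i1 i2 heq
      by_cases h1 : (i1 : ℕ) ≤ j <;> by_cases h2 : (i2 : ℕ) ≤ j
      · rw [hΦ] at heq; simp only [dif_pos h1, dif_pos h2] at heq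
        exact hx heq
      · rw [hΦ] at heq; simp only [dif_pos h1, dif_neg h2] at heq
        exact absurd (heq ▸ hxA i1 h1) (e ⟨(i2 : ℕ) - (j + 1), by have := i2.isLt; omega⟩).2
      · rw [hΦ] at heq; simp only [dif_neg h1, dif_pos h2] at heq
        exact absurd (heq ▸ hxA i2 h2) (e ⟨(i1 : ℕ) - (j + 1), by have := i1.isLt; omega⟩).2
      · rw [hΦ] at heq; simp only [dif_neg h1, dif_neg h2] at heq
        have := e.injective (Subtype.ext heq)
        have hval : (i1 : ℕ) - (j + 1) = (i2 : ℕ) - (j + 1) := congrArg Fin.val this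
        exact Fin.ext (by omega)
    · intro i hi
      rw [hΦ]; simp only [dif_pos hi]
  have hinj : Function.Injective Φ := by
    intro e1 e2 heq
    apply Function.Embedding.ext
    intro k
    have hk : (k : ℕ) < L - j := k.isLt
    have hi : (j + 1 + (k : ℕ)) < L + 1 := by omega
    have := congrFun heq (⟨j + 1 + (k : ℕ), hi⟩ : Fin (L + 1))
    rw [hΦ] at this
    simp only [dif_neg (by omega : ¬ (j + 1 + (k : ℕ)) ≤ j)] at this
    have hidx : (⟨(j + 1 + (k : ℕ)) - (j + 1), by omega⟩ : Fin (L - j)) = k := by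
      apply Fin.ext
      simp only [Fin.val_mk]
      omega
    rw [hidx] at this
    exact Subtype.ext this
  calc (n - (j + 1)).descFactorial (L - j)
      = Fintype.card (Fin (L - j) ↪ {v : Fin n // v ∉ A}) := by
        rw [Fintype.card_embedding_eq, Fintype.card_fin, hτ]
    _ = (Finset.univ : Finset (Fin (L - j) ↪ {v : Fin n // v ∉ A})).card := by
        rw [Finset.card_univ]
    _ ≤ t.card := Finset.card_le_card_of_injOn Φ (fun e _ => hmem e)
        (Function.Injective.injOn hinj)


end AuxStmt3

theorem stmt3 {n L : ℕ} (hn : 4 ≤ n) (hL2 : 2 ≤ L) (hLn : (L : ℝ) ≤ Real.sqrt n)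
    (G : SimpleGraph (Fin n)) (hG : G.Connected) (P : PathSystem G)
    (x : Fin (L + 1) → Fin n) (hx1 : x 0 = ⟨0, by omega⟩)
    (hxgood : Function.Injective x)
    (b1 : ℤ) (hb1 : b1 = 0 ∨ b1 = 1) :
    (1 / (2 * Real.exp 1)) * ((L : ℝ) + 1) * (n : ℝ) ^ (L + 1)
      ≤ ∑ y ∈ Finset.univ.filter (fun y : Fin (L + 1) → Fin n => y 0 = (⟨0, by omega⟩ : Fin n)),
          ∑ b2 ∈ ({0, 1} : Finset ℤ), rstar x y b1 b2 := by
  classical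
  have hnR : (0 : ℝ) < n := by positivity
  -- L² ≤ n
  have hL2n : (L : ℝ) ^ 2 ≤ n := by
    have h := Real.sq_sqrt (le_of_lt (by positivity : (0:ℝ) < (n:ℝ)))
    nlinarith [Real.sqrt_nonneg (n : ℝ)]
  have hLLn : L * L ≤ n := by
    have h2 : ((L * L : ℕ) : ℝ) ≤ (n : ℝ) := by push_cast; nlinarith
    exact_mod_cast h2
  have hL1n : L + 1 ≤ n := by nlinarith
  set z0 : Fin n := (⟨0, by omega⟩ : Fin n) with hz0
  set S0 : Finset (Fin (L + 1) → Fin n) :=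
    Finset.univ.filter (fun y : Fin (L + 1) → Fin n => y 0 = z0) with hS0
  set S1 : Finset (Fin (L + 1) → Fin n) :=
    S0.filter (fun y => Function.Injective y) with hS1
  -- step 1: inner sum over b2
  have hb2sum : ∀ y : Fin (L + 1) → Fin n,
      (∑ b2 ∈ ({0, 1} : Finset ℤ), rstar x y b1 b2)
        = if Function.Injective y then (n : ℝ) ^ (J0 x y + 1) else 0 := by
    intro y
    rw [Finset.sum_pair (by norm_num : (0:ℤ) ≠ 1)]
    by_cases hy : Function.Injective y
    · rcases hb1 with h | h <;> subst h
      · rw [show rstar x y 0 0 = 0 from if_pos (Or.inl rfl)]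
        rw [show rstar x y 0 1 = (n : ℝ) ^ (J0 x y + 1) from
          if_neg (by push_neg; exact ⟨by norm_num, hxgood, hy⟩)]
        rw [if_pos hy]; ring
      · rw [show rstar x y 1 1 = 0 from if_pos (Or.inl rfl)]
        rw [show rstar x y 1 0 = (n : ℝ) ^ (J0 x y + 1) from
          if_neg (by push_neg; exact ⟨by norm_num, hxgood, hy⟩)]
        rw [if_pos hy]; ring
    · rw [show rstar x y b1 0 = 0 from if_pos (Or.inr (Or.inr hy)),
        show rstar x y b1 1 = 0 from if_pos (Or.inr (Or.inr hy)), if_neg hy]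
      ring
  have hstep1 : ∑ y ∈ S0, ∑ b2 ∈ ({0, 1} : Finset ℤ), rstar x y b1 b2
      = ∑ y ∈ S1, (n : ℝ) ^ (J0 x y + 1) := by
    conv_rhs => rw [hS1, Finset.sum_filter]
    exact Finset.sum_congr rfl fun y _ => hb2sum y
  -- step 2: per-y geometric lower bound, then swap
  have hstep2 : ∑ j ∈ Finset.range (L + 1),
      (∑ y ∈ S1, (if j ≤ J0 x y then ((n : ℝ) - 1) * (n : ℝ) ^ j else 0))
      ≤ ∑ y ∈ S1, (n : ℝ) ^ (J0 x y + 1) := by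
    rw [Finset.sum_comm]
    exact Finset.sum_le_sum fun y _ => sum_ite_le_pow x y
  -- step 3: per-j count
  have hstep3 : ∀ j ∈ Finset.range (L + 1),
      (((n - (j + 1)).descFactorial (L - j) : ℝ)) * (((n : ℝ) - 1) * (n : ℝ) ^ j)
      ≤ ∑ y ∈ S1, (if j ≤ J0 x y then ((n : ℝ) - 1) * (n : ℝ) ^ j else 0) := by
    intro j hj
    rw [Finset.mem_range] at hj
    have hjL : j ≤ L := by omega
    rw [← Finset.sum_filter, Finset.sum_const, nsmul_eq_mul]
    have hfeq : S1.filter (fun y => j ≤ J0 x y)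
        = S1.filter (fun y => ∀ i : Fin (L + 1), (i : ℕ) ≤ j → y i = x i) := by
      apply Finset.filter_congr
      intro y hy
      have hy0 : x 0 = y 0 := by
        rw [hS1, Finset.mem_filter, hS0, Finset.mem_filter] at hy
        rw [hx1, hy.1.2]
      constructor
      · exact of_le_J0 x y hy0 j
      · exact le_J0 x y j hjL
    rw [hfeq]
    have hcard := card_prefix_ge x hxgood j hjL
      (S1.filter (fun y => ∀ i : Fin (L + 1), (i : ℕ) ≤ j → y i = x i))
      (by
        intro y hyinj hypre
        rw [Finset.mem_filter, hS1, Finset.mem_filter, hS0, Finset.mem_filter]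
        exact ⟨⟨⟨Finset.mem_univ y, (hypre 0 (by simp)).trans hx1⟩, hyinj⟩, hypre⟩)
    have hc : (0 : ℝ) ≤ ((n : ℝ) - 1) * (n : ℝ) ^ j := by
      apply mul_nonneg _ (by positivity)
      have : (4 : ℝ) ≤ n := by exact_mod_cast hn
      linarith
    apply mul_le_mul_of_nonneg_right _ hc
    exact_mod_cast hcard
  -- step 4: arithmetic lower bound per j
  have hstep4 : ∀ j ∈ Finset.range (L + 1),
      (n : ℝ) ^ (L + 1) - (n : ℝ) ^ L * (1 + ((L - j : ℕ) : ℝ) * L)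
      ≤ (((n - (j + 1)).descFactorial (L - j) : ℝ)) * (((n : ℝ) - 1) * (n : ℝ) ^ j) := by
    intro j hj
    rw [Finset.mem_range] at hj
    have hjL : j ≤ L := by omega
    set D : ℝ := ((n - (j + 1)).descFactorial (L - j) : ℝ) with hD
    have hb := pow_sub_le_descFactorial n (L - j) j (by omega)
    -- bound the sum σ
    have hσ : ∑ t ∈ Finset.Ico (j + 1) (j + 1 + (L - j)), (t : ℝ)
        ≤ ((L - j : ℕ) : ℝ) * L := by
      have h1 := Finset.sum_le_card_nsmul (Finset.Ico (j + 1) (j + 1 + (L - j)))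
        (fun t => (t : ℝ)) (L : ℝ)
        (fun t ht => by
          rw [Finset.mem_Ico] at ht
          have htL : t ≤ L := by omega
          simpa using (Nat.cast_le (α := ℝ)).mpr htL)
      rwa [Nat.card_Ico, nsmul_eq_mul, show j + 1 + (L - j) - (j + 1) = L - j from by omega]
        at h1
    have hσnn : (0:ℝ) ≤ ∑ t ∈ Finset.Ico (j + 1) (j + 1 + (L - j)), (t : ℝ) :=
      Finset.sum_nonneg fun t _ => by positivity
    have hnj : (0:ℝ) ≤ (n : ℝ) ^ j := by positivity
    have hnLj : (0:ℝ) ≤ (n : ℝ) ^ (L - j) := by positivity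
    -- D ≤ n^(L-j)
    have hDle : D ≤ (n : ℝ) ^ (L - j) := by
      rw [hD]
      have h1 : (n - (j + 1)).descFactorial (L - j) ≤ (n - (j + 1)) ^ (L - j) :=
        Nat.descFactorial_le_pow _ _
      have h2 : (n - (j + 1)) ^ (L - j) ≤ n ^ (L - j) :=
        Nat.pow_le_pow_left (by omega) _
      exact_mod_cast le_trans h1 h2
    have e1 : (n : ℝ) ^ (L + 1) = (n : ℝ) ^ j * (n : ℝ) ^ (L - j + 1) := by
      rw [← pow_add]; congr 1; omega
    have e2 : (n : ℝ) ^ L = (n : ℝ) ^ j * (n : ℝ) ^ (L - j) := by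
      rw [← pow_add]; congr 1; omega
    have hmul1 := mul_le_mul_of_nonneg_left hb hnj
    have hmul2 := mul_le_mul_of_nonneg_left hσ (mul_nonneg hnj hnLj)
    nlinarith [mul_le_mul_of_nonneg_left hDle hnj]
  -- assemble sums
  have hSigmaN : (∑ j ∈ Finset.range (L + 1), (L - j)) * 2 = (L + 1) * L := by
    have hrefl : ∑ j ∈ Finset.range (L + 1), (L - j)
        = ∑ j ∈ Finset.range (L + 1), j := by
      simpa using Finset.sum_range_reflect (fun k => k) (L + 1)
    rw [hrefl, Finset.sum_range_id_mul_two]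
    simp
  have hsplit : ∑ j ∈ Finset.range (L + 1),
      ((n : ℝ) ^ (L + 1) - (n : ℝ) ^ L * (1 + ((L - j : ℕ) : ℝ) * L))
      = ((L : ℝ) + 1) * (n : ℝ) ^ (L + 1)
        - (n : ℝ) ^ L * (((L : ℝ) + 1) + ((∑ j ∈ Finset.range (L + 1), (L - j) : ℕ) : ℝ) * L) := by
    rw [Finset.sum_sub_distrib, Finset.sum_const, Finset.card_range, ← Finset.mul_sum,
      Finset.sum_add_distrib, Finset.sum_const, Finset.card_range, ← Finset.sum_mul]
    push_cast
    ring
  -- final chain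
  have hchain : ((L : ℝ) + 1) * (n : ℝ) ^ (L + 1)
        - (n : ℝ) ^ L * (((L : ℝ) + 1) + ((∑ j ∈ Finset.range (L + 1), (L - j) : ℕ) : ℝ) * L)
      ≤ ∑ y ∈ S0, ∑ b2 ∈ ({0, 1} : Finset ℤ), rstar x y b1 b2 := by
    rw [hstep1, ← hsplit]
    refine le_trans (Finset.sum_le_sum fun j hj => le_trans (hstep4 j hj) (hstep3 j hj)) hstep2
  -- numeric conclusion
  have hSval : ((∑ j ∈ Finset.range (L + 1), (L - j) : ℕ) : ℝ) * 2 = ((L : ℝ) + 1) * L := by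
    exact_mod_cast congrArg (Nat.cast : ℕ → ℝ) hSigmaN
  have hexp2 : (2 : ℝ) ≤ Real.exp 1 := by
    have := Real.add_one_le_exp (1 : ℝ)
    linarith
  have hexppos : (0 : ℝ) < Real.exp 1 := Real.exp_pos 1
  have hnL : (0:ℝ) ≤ (n : ℝ) ^ L := by positivity
  have hpowsucc : (n : ℝ) ^ (L + 1) = (n : ℝ) ^ L * n := pow_succ _ _
  have hfrac : 1 / (2 * Real.exp 1) ≤ 1 / 4 := by
    apply div_le_div_of_nonneg_left (by norm_num) (by norm_num)
    linarith
  have hn4 : (4 : ℝ) ≤ (n : ℝ) := by exact_mod_cast hn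
  have hLpos : (0:ℝ) ≤ (L : ℝ) := by positivity
  calc (1 / (2 * Real.exp 1)) * ((L : ℝ) + 1) * (n : ℝ) ^ (L + 1)
      ≤ (1 / 4) * ((L : ℝ) + 1) * (n : ℝ) ^ (L + 1) := by
        apply mul_le_mul_of_nonneg_right _ (by positivity)
        apply mul_le_mul_of_nonneg_right hfrac (by positivity)
    _ ≤ ((L : ℝ) + 1) * (n : ℝ) ^ (L + 1)
        - (n : ℝ) ^ L * (((L : ℝ) + 1) + ((∑ j ∈ Finset.range (L + 1), (L - j) : ℕ) : ℝ) * L) := by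
        rw [hpowsucc]
        have hS : ((∑ j ∈ Finset.range (L + 1), (L - j) : ℕ) : ℝ) = ((L : ℝ) + 1) * L / 2 := by
          linarith
        rw [hS]
        have key : (n:ℝ) ^ L * (((L:ℝ) + 1) + ((L:ℝ) + 1) * L / 2 * L)
            ≤ (3/4) * (((L:ℝ) + 1) * ((n:ℝ) ^ L * n)) := by
          nlinarith [mul_le_mul_of_nonneg_left hL2n
              (mul_nonneg (by linarith : (0:ℝ) ≤ (L:ℝ)+1) hnL),
            mul_nonneg (mul_nonneg (by linarith : (0:ℝ) ≤ (L:ℝ)+1) hnL)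
              (by linarith : (0:ℝ) ≤ (n:ℝ) - 4)]
        linarith
    _ ≤ _ := hchain
end

section
/- Let G be a connected undirected graph on [n], let P be an all-pairs set of paths for G, and let L≥2 be an integer. Let x,y∈{1}×[n]^L be good with x≠y, let J=J_{x,y}, and let b1,b2∈{0,1}. If v∈[n] satisfies g_{x,b1}(v)≠g_{y,b2}(v), then v∈Tail(J,S_x) or v∈Tail(J,S_y). -/
open Finset

section Helpers
variable {n L : ℕ} {G : SimpleGraph (Fin n)} (P : PathSystem G)

lemma xcast (x : Fin (L + 1) → Fin n) {a b : ℕ} (ha : a < L + 1) (hb : b < L + 1)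
    (h : a = b) : x ⟨a, ha⟩ = x ⟨b, hb⟩ := by subst h; rfl

lemma segSupport_eq (x : Fin (L + 1) → Fin n) {i : ℕ} (hi : i < L) :
    segSupport P x i
      = (P.path (x ⟨i, by omega⟩) (x ⟨i + 1, by omega⟩)).support := by
  unfold segSupport
  have h1 : (⟨min i L, by omega⟩ : Fin (L + 1)) = ⟨i, by omega⟩ := by
    simp [Fin.ext_iff]; omega
  have h2 : (⟨min (i + 1) L, by omega⟩ : Fin (L + 1)) = ⟨i + 1, by omega⟩ := by
    simp [Fin.ext_iff]; omega
  rw [h1, h2]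

lemma segSupport_congr (x y : Fin (L + 1) → Fin n) {i : ℕ} (hi : i < L)
    (h1 : x ⟨i, by omega⟩ = y ⟨i, by omega⟩)
    (h2 : x ⟨i + 1, by omega⟩ = y ⟨i + 1, by omega⟩) :
    segSupport P x i = segSupport P y i := by
  rw [segSupport_eq P x hi, segSupport_eq P y hi, h1, h2]

lemma mem_seg_iff (x : Fin (L + 1) → Fin n) {i : ℕ} (hi : i < L) (v : Fin n) :
    v ∈ segSupport P x i ↔ v = x ⟨i, by omega⟩ ∨ v ∈ (segSupport P x i).tail := by
  rw [segSupport_eq P x hi]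
  conv_lhs => rw [SimpleGraph.Walk.support_eq_cons]
  exact List.mem_cons

lemma indexOf_head (x : Fin (L + 1) → Fin n) {i : ℕ} (hi : i < L) :
    (segSupport P x i).idxOf (x ⟨i, by omega⟩) = 0 := by
  rw [segSupport_eq P x hi, SimpleGraph.Walk.support_eq_cons]
  exact List.idxOf_cons_self

lemma last_mem_tail (u w : Fin n) (huw : u ≠ w) : w ∈ (P.path u w).support.tail := by
  have h := (P.path u w).end_mem_support
  rw [SimpleGraph.Walk.support_eq_cons] at h
  rcases List.mem_cons.mp h with h | h
  · exact absurd h.symm huw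
  · exact h

lemma mem_stair_iff (x : Fin (L + 1) → Fin n) {j : ℕ} (hj : j ≤ L) (v : Fin n) :
    v ∈ stairSupportFrom P x j ↔
      v = x ⟨j, by omega⟩ ∨ ∃ i, j ≤ i ∧ i < L ∧ v ∈ (segSupport P x i).tail := by
  unfold stairSupportFrom
  simp only [List.mem_cons, List.mem_flatten, List.mem_ofFn]
  constructor
  · rintro (h | ⟨l, ⟨k, hk⟩, hv⟩)
    · left; rw [h]; exact xcast x _ _ (by omega)
    · right
      refine ⟨j + k, Nat.le_add_right _ _, by have := k.isLt; omega, ?_⟩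
      rw [segSupport_eq P x (by have := k.isLt; omega)]
      rw [← hk] at hv; exact hv
  · rintro (h | ⟨i, hji, hiL, hv⟩)
    · left; rw [h]; exact xcast x _ _ (by omega)
    · right
      refine ⟨_, ⟨⟨i - j, by omega⟩, rfl⟩, ?_⟩
      rw [segSupport_eq P x hiL] at hv
      have e1 : x ⟨j + (⟨i - j, by omega⟩ : Fin (L - j)), by omega⟩ = x ⟨i, by omega⟩ :=
        xcast x _ _ (by simp; omega)
      have e2 : x ⟨j + (⟨i - j, by omega⟩ : Fin (L - j)) + 1, by omega⟩ = x ⟨i + 1, by omega⟩ :=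
        xcast x _ _ (by simp; omega)
      beta_reduce
      rw [e1, e2]; exact hv

lemma mem_tail_iff_s6 (x : Fin (L + 1) → Fin n) {j : ℕ} (hj : j ≤ L) (v : Fin n) :
    v ∈ tailSupport P x j ↔ ∃ i, j ≤ i ∧ i < L ∧ v ∈ (segSupport P x i).tail := by
  unfold tailSupport stairSupportFrom
  rw [List.erase_cons_head]
  simp only [List.mem_flatten, List.mem_ofFn]
  constructor
  · rintro ⟨l, ⟨k, hk⟩, hv⟩
    refine ⟨j + k, Nat.le_add_right _ _, by have := k.isLt; omega, ?_⟩
    rw [segSupport_eq P x (by have := k.isLt; omega)]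
    rw [← hk] at hv; exact hv
  · rintro ⟨i, hji, hiL, hv⟩
    refine ⟨_, ⟨⟨i - j, by omega⟩, rfl⟩, ?_⟩
    rw [segSupport_eq P x hiL] at hv
    have e1 : x ⟨j + (⟨i - j, by omega⟩ : Fin (L - j)), by omega⟩ = x ⟨i, by omega⟩ :=
      xcast x _ _ (by simp; omega)
    have e2 : x ⟨j + (⟨i - j, by omega⟩ : Fin (L - j)) + 1, by omega⟩ = x ⟨i + 1, by omega⟩ :=
      xcast x _ _ (by simp; omega)
    beta_reduce
    rw [e1, e2]; exact hv

lemma J0_le_and_spec (x y : Fin (L + 1) → Fin n) (h0 : x 0 = y 0) :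
    J0 x y ≤ L ∧ ∀ k : Fin (L + 1), (k : ℕ) ≤ J0 x y → x k = y k := by
  classical
  have hne : (Finset.univ.filter fun i : Fin (L + 1) => ∀ k ≤ i, x k = y k).Nonempty := by
    refine ⟨0, ?_⟩
    simp only [Finset.mem_filter, Finset.mem_univ, true_and]
    intro k hk
    have : k = 0 := le_antisymm hk (Fin.zero_le _)
    rw [this]; exact h0
  obtain ⟨i, hi, hJ⟩ := Finset.exists_mem_eq_sup _ hne fun i : Fin (L + 1) => (i : ℕ)
  simp only [Finset.mem_filter, Finset.mem_univ, true_and] at hi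
  refine ⟨?_, ?_⟩
  · rw [show J0 x y = (i : ℕ) from hJ]; omega
  · intro k hk
    exact hi k (by rw [Fin.le_def]; rw [show J0 x y = (i : ℕ) from hJ] at hk; exact hk)

end Helpers

theorem stmt6 {n L : ℕ} (hn : 2 ≤ n) (hL : 2 ≤ L)
    (G : SimpleGraph (Fin n)) (hG : G.Connected) (P : PathSystem G)
    (x y : Fin (L + 1) → Fin n)
    (hx1 : x 0 = ⟨0, by omega⟩) (hy1 : y 0 = ⟨0, by omega⟩)
    (hxgood : Function.Injective x) (hygood : Function.Injective y) (hxy : x ≠ y)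
    (b1 b2 : ℤ) (hb1 : b1 = 0 ∨ b1 = 1) (hb2 : b2 = 0 ∨ b2 = 1)
    (v : Fin n) (hv : gS P x b1 v ≠ gS P y b2 v) :
    v ∈ tailSupport P x (J0 x y) ∨ v ∈ tailSupport P y (J0 x y) := by
  classical
  by_contra hcon
  push_neg at hcon
  obtain ⟨hvx, hvy⟩ := hcon
  have h0 : x 0 = y 0 := by rw [hx1, hy1]
  obtain ⟨hJle, hpre⟩ := J0_le_and_spec x y h0
  set J := J0 x y with hJdef
  have hJL : J < L := by
    rcases lt_or_ge J L with h | h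
    · exact h
    · exfalso
      apply hxy
      funext k
      exact hpre k (by omega)
  have htx : ∀ k, J ≤ k → k < L → v ∉ (segSupport P x k).tail := by
    intro k h1 h2 hmem
    exact hvx ((mem_tail_iff_s6 P x (le_of_lt hJL) v).mpr ⟨k, h1, h2, hmem⟩)
  have hty : ∀ k, J ≤ k → k < L → v ∉ (segSupport P y k).tail := by
    intro k h1 h2 hmem
    exact hvy ((mem_tail_iff_s6 P y (le_of_lt hJL) v).mpr ⟨k, h1, h2, hmem⟩)
  have forced : ∀ (z : Fin (L + 1) → Fin n), Function.Injective z →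
      (∀ k, J ≤ k → k < L → v ∉ (segSupport P z k).tail) →
      ∀ k, J ≤ k → k < L → v ∈ segSupport P z k →
        k = J ∧ v = z ⟨J, by omega⟩ := by
    intro z hz ht k h1 h2 hmem
    rcases (mem_seg_iff P z h2 v).mp hmem with h | h
    · rcases eq_or_lt_of_le h1 with heq | hlt
      · exact ⟨heq.symm, by rw [h]; exact xcast z _ _ heq.symm⟩
      · exfalso
        apply ht (k - 1) (by omega) (by omega)
        rw [segSupport_eq P z (show k - 1 < L by omega)]
        have e : z ⟨k - 1 + 1, by omega⟩ = z ⟨k, by omega⟩ := xcast z _ _ (by omega)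
        rw [e, h]
        exact last_mem_tail P _ _
          (fun hc => by have := hz hc; simp [Fin.ext_iff] at this; omega)
    · exact absurd h (ht k h1 h2)
  have key : ∀ k, k < L → (v ∈ segSupport P x k ↔ v ∈ segSupport P y k) := by
    intro k hk
    rcases lt_or_ge k J with hlt | hge
    · rw [segSupport_congr P x y hk (hpre _ (by simp; omega)) (hpre _ (by simp; omega))]
    · constructor
      · intro hm
        obtain ⟨hkJ, hvJ⟩ := forced x hxgood htx k hge hk hm
        subst hkJ
        refine (mem_seg_iff P y hk v).mpr (Or.inl ?_)
        rw [hvJ]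
        exact hpre _ (by simp)
      · intro hm
        obtain ⟨hkJ, hvJ⟩ := forced y hygood hty k hge hk hm
        subst hkJ
        refine (mem_seg_iff P x hk v).mpr (Or.inl ?_)
        rw [hvJ]
        exact (hpre _ (by simp)).symm
  have hset : (Finset.range L).filter (fun i => v ∈ segSupport P x i)
      = (Finset.range L).filter (fun i => v ∈ segSupport P y i) := by
    ext k
    simp only [Finset.mem_filter, Finset.mem_range]
    constructor
    · rintro ⟨h1, h2⟩; exact ⟨h1, (key k h1).mp h2⟩
    · rintro ⟨h1, h2⟩; exact ⟨h1, (key k h1).mpr h2⟩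
  have hmax : maxSegIdx P x v = maxSegIdx P y v := by
    unfold maxSegIdx; rw [hset]
  have stair_iff : ∀ (z : Fin (L + 1) → Fin n), Function.Injective z →
      (v ∈ stairSupportFrom P z 0 ↔ ∃ k, k < L ∧ v ∈ segSupport P z k) := by
    intro z hz
    rw [mem_stair_iff P z (by omega) v]
    constructor
    · rintro (h | ⟨i, _, hiL, hv'⟩)
      · exact ⟨0, by omega, (mem_seg_iff P z (by omega) v).mpr (Or.inl h)⟩
      · exact ⟨i, hiL, (mem_seg_iff P z hiL v).mpr (Or.inr hv')⟩
    · rintro ⟨k, hkL, hk⟩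
      rcases (mem_seg_iff P z hkL v).mp hk with h | h
      · rcases Nat.eq_zero_or_pos k with rfl | hk0
        · exact Or.inl h
        · right
          refine ⟨k - 1, Nat.zero_le _, by omega, ?_⟩
          rw [segSupport_eq P z (show k - 1 < L by omega)]
          have e : z ⟨k - 1 + 1, by omega⟩ = z ⟨k, by omega⟩ := xcast z _ _ (by omega)
          rw [e, h]
          exact last_mem_tail P _ _
            (fun hc => by have := hz hc; simp [Fin.ext_iff] at this; omega)
      · exact Or.inr ⟨k, Nat.zero_le _, hkL, h⟩
  have hvlx : v ≠ x (Fin.last L) := by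
    intro h
    apply htx (L - 1) (by omega) (by omega)
    rw [segSupport_eq P x (show L - 1 < L by omega)]
    have e : x ⟨L - 1 + 1, by omega⟩ = x (Fin.last L) := by
      congr 1; rw [Fin.ext_iff]; simp [Fin.last]; omega
    rw [e, h]
    exact last_mem_tail P _ _
      (fun hc => by have := hxgood hc; simp [Fin.ext_iff, Fin.last] at this; omega)
  have hvly : v ≠ y (Fin.last L) := by
    intro h
    apply hty (L - 1) (by omega) (by omega)
    rw [segSupport_eq P y (show L - 1 < L by omega)]
    have e : y ⟨L - 1 + 1, by omega⟩ = y (Fin.last L) := by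
      congr 1; rw [Fin.ext_iff]; simp [Fin.last]; omega
    rw [e, h]
    exact last_mem_tail P _ _
      (fun hc => by have := hygood hc; simp [Fin.ext_iff, Fin.last] at this; omega)
  have hf : fS P x v = fS P y v := by
    unfold fS
    by_cases hs : v ∈ stairSupportFrom P x 0
    · have hex : ∃ k, k < L ∧ v ∈ segSupport P x k := (stair_iff x hxgood).mp hs
      have hs' : v ∈ stairSupportFrom P y 0 := by
        obtain ⟨k, h1, h2⟩ := hex
        exact (stair_iff y hygood).mpr ⟨k, h1, (key k h1).mp h2⟩
      rw [if_pos hs, if_pos hs']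
      have hne : ((Finset.range L).filter (fun i => v ∈ segSupport P x i)).Nonempty := by
        obtain ⟨k, h1, h2⟩ := hex
        exact ⟨k, by simp only [Finset.mem_filter, Finset.mem_range]; exact ⟨h1, h2⟩⟩
      obtain ⟨m, hm, hmeq⟩ := Finset.exists_mem_eq_sup _ hne id
      have hmx : maxSegIdx P x v = m := hmeq
      have hmy : maxSegIdx P y v = m := by rw [← hmax]; exact hmx
      simp only [Finset.mem_filter, Finset.mem_range] at hm
      obtain ⟨hmL, hmem⟩ := hm
      have hmemy : v ∈ segSupport P y m := (key m hmL).mp hmem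
      have hseg_idx : (segSupport P x (maxSegIdx P x v)).idxOf v
          = (segSupport P y (maxSegIdx P y v)).idxOf v := by
        rw [hmx, hmy]
        rcases lt_or_ge m J with hlt | hge
        · rw [segSupport_congr P x y hmL (hpre _ (by simp; omega))
            (hpre _ (by simp; omega))]
        · obtain ⟨hmJ, hvJx⟩ := forced x hxgood htx m hge hmL hmem
          obtain ⟨_, hvJy⟩ := forced y hygood hty m hge hmL hmemy
          subst hmJ
          have hxyJ : x ⟨J, by omega⟩ = y ⟨J, by omega⟩ := hpre _ (by simp)
          rw [hvJx, indexOf_head P x hJL, hxyJ, indexOf_head P y hJL]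
      rw [hseg_idx, hmax]
    · have hs' : v ∉ stairSupportFrom P y 0 := by
        intro hc
        obtain ⟨k, h1, h2⟩ := (stair_iff y hygood).mp hc
        exact hs ((stair_iff x hxgood).mpr ⟨k, h1, (key k h1).mpr h2⟩)
      rw [if_neg hs, if_neg hs', h0]
  apply hv
  unfold gS
  rw [if_neg hvlx, if_neg hvly, hf]
end
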